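/- For g = sl_N and i = 1,…,N−1, the operator 𝔹_{w_{[i]},V}(λ) (corresponding to the minuscule coweight ω_i^∨) is the product, in a suitable order, of all operators B^α_V(λ) with α ∈ Σ_+ and (ω_i^∨, α) > 0. Equivalently, the set of positive roots reflected to negative roots by w_{[i]} is {α ∈ Σ_+ | (ω_i^∨, α) = 1}. -/

import Mathlib

/- STATEMENT 15: for g = sl_N and i = 1,…,N−1, the operator 𝔹_{w_{[i]},V}(λ) is the
product, in a suitable order, of all operators B^α_V(λ) with α ∈ Σ₊ and (ω_i^∨,α) > 0;
equivalently, the set of positive roots sent to negative roots by w_{[i]} is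
{α ∈ Σ₊ | (ω_i^∨, α) = 1}.

We write N = M+1.  Roots of sl_N are pairs (a,b), a ≠ b (the root e_aa − e_bb),
positive iff a < b; (ω_i^∨, e_aa − e_bb) = 1 iff a < i ≤ b (0-indexed), and
w_{[i]} ∈ S_N is k ↦ k − i (mod N).  The Lie algebra is recorded by its gl-generators
`Egl a b` with the standard commutation relations, acting on the finite-dimensional
module VV through `act`.  For the root α = (a,b): H_α = e_aa − e_bb, E_α = e_ab,
F_α = e_ba, and on the weight space VV[ν],
`B^α(λ) = p((λ+ν/2,α^∨)−1; H_α,E_α,F_α)`.  The operator 𝔹_{w,V}(λ) is the ordered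
product of the B^{α^j}(λ) over the root sequence α^j of a reduced presentation of w
(Lemma B=BBB / property II of Section 2.7 of the paper). -/

open scoped BigOperators

attribute [local instance 100] LieRing.ofAssociativeRing

noncomputable section

variable {VV : Type*} [AddCommGroup VV] [Module ℂ VV]

/-- `p(t; H, E, F)`, truncated at `k = finrank` (exact on finite-dimensional modules). -/
def pEnd [FiniteDimensional ℂ VV] (t : ℂ) (H E F : Module.End ℂ VV) : Module.End ℂ VV :=
  ∑ k ∈ Finset.range (Module.finrank ℂ VV + 1),
    ((Nat.factorial k : ℂ))⁻¹ •
      (F ^ k * E ^ k *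
        ((List.range k).map fun j =>
          Ring.inverse (t • (1 : Module.End ℂ VV) - H - (j : ℂ) • 1)).prod)

variable {g : Type*} [LieRing g] [LieAlgebra ℂ g] {M : ℕ}

/-- The simple transposition s_j = (j, j+1) ∈ S_N, N = M+1. -/
def tau (j : Fin M) : Equiv.Perm (Fin (M+1)) := Equiv.swap j.castSucc j.succ

/-- The product s_{i_k} ⋯ s_{i_1} for the word l = [i_1, …, i_k]. -/
def wordPerm (l : List (Fin M)) : Equiv.Perm (Fin (M+1)) := ((l.map tau).reverse).prod

/-- The root sequence α^1 = α_{i_1}, α^j = s_{i_1}⋯s_{i_{j−1}}(α_{i_j}) of a word,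
at the level of pairs (a,b) ↔ the root e_aa − e_bb. -/
def rootPairs : List (Fin M) → List (Fin (M+1) × Fin (M+1))
  | [] => []
  | j :: t => (j.castSucc, j.succ) :: (rootPairs t).map fun p => (tau j p.1, tau j p.2)

/-- The argument `(λ+ν/2, α^∨) − 1` for the root α = e_aa − e_bb. -/
def tval (lam nu : Fin (M+1) → ℝ) (a b : Fin (M+1)) : ℂ :=
  (((lam a - lam b) + (nu a - nu b) / 2 : ℝ) : ℂ) - 1

/-- The operator `B^α_V(λ)` on the weight space VV[ν], α = (a,b). -/
def Bop [FiniteDimensional ℂ VV] (act : g →ₗ⁅ℂ⁆ Module.End ℂ VV)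
    (Egl : Fin (M+1) → Fin (M+1) → g) (lam nu : Fin (M+1) → ℝ) (a b : Fin (M+1)) :
    Module.End ℂ VV :=
  pEnd (tval lam nu a b) (act (Egl a a - Egl b b)) (act (Egl a b)) (act (Egl b a))

/-- The operator `𝔹_{w,V}(λ)` on VV[ν]: the ordered product
`B^{α^k}(λ) ⋯ B^{α^1}(λ)` over the root sequence of a reduced word for w. -/
def BBop [FiniteDimensional ℂ VV] (act : g →ₗ⁅ℂ⁆ Module.End ℂ VV)
    (Egl : Fin (M+1) → Fin (M+1) → g) (lam nu : Fin (M+1) → ℝ) (l : List (Fin M)) :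
    Module.End ℂ VV :=
  (((rootPairs l).map fun p => Bop act Egl lam nu p.1 p.2).reverse).prod

namespace Stmt15Aux

lemma tau_val (j : Fin M) (x : Fin (M+1)) :
    (tau j x).val = if x.val = j.val then j.val + 1
      else if x.val = j.val + 1 then j.val else x.val := by
  rw [tau, Equiv.swap_apply_def]
  split_ifs with h1 h2 h3 h4 h5 <;> simp_all [Fin.ext_iff] <;> omega

lemma tau_lt (j : Fin M) {a b : Fin (M+1)} (hab : a < b)
    (hne : (a, b) ≠ (j.castSucc, j.succ)) : tau j a < tau j b := by
  have h : ¬(a.val = j.val ∧ b.val = j.val + 1) := by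
    rintro ⟨h1, h2⟩
    exact hne (by rw [Prod.ext_iff]; exact ⟨Fin.ext h1, Fin.ext h2⟩)
  rw [Fin.lt_def] at hab ⊢
  rw [tau_val, tau_val]
  have hb := b.isLt
  have hj := j.isLt
  split_ifs <;> omega

def pm (j : Fin M) : Fin (M+1) × Fin (M+1) → Fin (M+1) × Fin (M+1) :=
  fun p => (tau j p.1, tau j p.2)

lemma tau_tau (j : Fin M) (x : Fin (M+1)) : tau j (tau j x) = x := by
  simp [tau]

lemma pm_pm (j : Fin M) (p : Fin (M+1) × Fin (M+1)) : pm j (pm j p) = p := by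
  simp [pm, tau_tau]

lemma pm_inj (j : Fin M) : Function.Injective (pm j) := by
  intro p q h
  have := congrArg (pm j) h
  rwa [pm_pm, pm_pm] at this

def invSet (w : Equiv.Perm (Fin (M+1))) : Finset (Fin (M+1) × Fin (M+1)) :=
  Finset.univ.filter fun p => p.1 < p.2 ∧ w p.2 < w p.1

lemma mem_invSet {w : Equiv.Perm (Fin (M+1))} {p : Fin (M+1) × Fin (M+1)} :
    p ∈ invSet w ↔ p.1 < p.2 ∧ w p.2 < w p.1 := by simp [invSet]

lemma invSet_one : invSet (1 : Equiv.Perm (Fin (M+1))) = ∅ := by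
  ext p
  simp only [mem_invSet, Equiv.Perm.one_apply, Finset.notMem_empty, iff_false]
  rintro ⟨h1, h2⟩
  exact absurd h2 (not_lt.2 h1.le)

lemma invSet_mul_ascent (u : Equiv.Perm (Fin (M+1))) (j : Fin M)
    (h : u j.castSucc < u j.succ) :
    invSet (u * tau j) = insert (j.castSucc, j.succ) ((invSet u).image (pm j)) := by
  ext p
  obtain ⟨a, b⟩ := p
  simp only [Finset.mem_insert, Finset.mem_image, mem_invSet, Equiv.Perm.mul_apply]
  constructor
  · rintro ⟨hab, hu⟩
    by_cases hcs : (a, b) = (j.castSucc, j.succ)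
    · exact Or.inl hcs
    · exact Or.inr ⟨pm j (a, b), ⟨tau_lt j hab hcs, hu⟩, pm_pm j (a, b)⟩
  · rintro (hcs | ⟨⟨c, d⟩, ⟨hq1, hq2⟩, hpm⟩)
    · rw [Prod.mk.injEq] at hcs
      obtain ⟨rfl, rfl⟩ := hcs
      refine ⟨Fin.castSucc_lt_succ (i := j), ?_⟩
      simpa [tau] using h
    · simp only [pm, Prod.mk.injEq] at hpm
      obtain ⟨rfl, rfl⟩ := hpm
      have hne : (c, d) ≠ (j.castSucc, j.succ) := by
        rintro heq
        rw [Prod.mk.injEq] at heq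
        obtain ⟨rfl, rfl⟩ := heq
        exact absurd hq2 (not_lt.2 h.le)
      exact ⟨tau_lt j hq1 hne, by rw [tau_tau, tau_tau]; exact hq2⟩

lemma invSet_mul_descent (u : Equiv.Perm (Fin (M+1))) (j : Fin M)
    (h : u j.succ < u j.castSucc) :
    invSet (u * tau j) = ((invSet u).erase (j.castSucc, j.succ)).image (pm j) := by
  ext p
  obtain ⟨a, b⟩ := p
  simp only [Finset.mem_image, Finset.mem_erase, mem_invSet, Equiv.Perm.mul_apply]
  constructor
  · rintro ⟨hab, hu⟩
    have hcs : (a, b) ≠ (j.castSucc, j.succ) := by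
      rintro heq
      rw [Prod.mk.injEq] at heq
      obtain ⟨rfl, rfl⟩ := heq
      simp only [tau, Equiv.swap_apply_left, Equiv.swap_apply_right] at hu
      exact absurd hu (not_lt.2 h.le)
    refine ⟨pm j (a, b), ⟨?_, tau_lt j hab hcs, hu⟩, pm_pm j (a, b)⟩
    intro heq
    have := congrArg (pm j) heq
    rw [pm_pm] at this
    have h2 : (a, b) = (j.succ, j.castSucc) := by
      rw [this]; simp [pm, tau]
    rw [Prod.mk.injEq] at h2
    obtain ⟨rfl, rfl⟩ := h2
    exact absurd hab (not_lt.2 (Fin.castSucc_lt_succ (i := j)).le)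
  · rintro ⟨⟨c, d⟩, ⟨hne, hq1, hq2⟩, hpm⟩
    simp only [pm, Prod.mk.injEq] at hpm
    obtain ⟨rfl, rfl⟩ := hpm
    exact ⟨tau_lt j hq1 hne, by rw [tau_tau, tau_tau]; exact hq2⟩

lemma card_ascent (u : Equiv.Perm (Fin (M+1))) (j : Fin M)
    (h : u j.castSucc < u j.succ) :
    (invSet (u * tau j)).card = (invSet u).card + 1 := by
  rw [invSet_mul_ascent u j h, Finset.card_insert_of_notMem,
    Finset.card_image_of_injective _ (pm_inj j)]
  intro hmem
  obtain ⟨q, hq, hpm⟩ := Finset.mem_image.1 hmem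
  have : q = (j.succ, j.castSucc) := by
    have := congrArg (pm j) hpm
    rw [pm_pm] at this
    rw [this]; simp [pm, tau]
  rw [this] at hq
  exact absurd (mem_invSet.1 hq).1 (not_lt.2 (Fin.castSucc_lt_succ (i := j)).le)

lemma cs_mem_invSet (u : Equiv.Perm (Fin (M+1))) (j : Fin M)
    (h : u j.succ < u j.castSucc) : (j.castSucc, j.succ) ∈ invSet u :=
  mem_invSet.2 ⟨Fin.castSucc_lt_succ (i := j), h⟩

lemma card_descent (u : Equiv.Perm (Fin (M+1))) (j : Fin M)
    (h : u j.succ < u j.castSucc) :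
    (invSet (u * tau j)).card = (invSet u).card - 1 := by
  rw [invSet_mul_descent u j h, Finset.card_image_of_injective _ (pm_inj j),
    Finset.card_erase_of_mem (cs_mem_invSet u j h)]

lemma wordPerm_nil : wordPerm ([] : List (Fin M)) = 1 := rfl

lemma wordPerm_cons (j : Fin M) (t : List (Fin M)) :
    wordPerm (j :: t) = wordPerm t * tau j := by
  simp [wordPerm]

lemma card_le_length (l : List (Fin M)) : (invSet (wordPerm l)).card ≤ l.length := by
  induction l with
  | nil => simp [wordPerm_nil, invSet_one]
  | cons j t ih =>
    rw [wordPerm_cons]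
    rcases lt_trichotomy ((wordPerm t) j.castSucc) ((wordPerm t) j.succ) with h | h | h
    · rw [card_ascent _ _ h]
      simpa using ih
    · exact absurd ((wordPerm t).injective h) (Fin.castSucc_lt_succ (i := j)).ne
    · rw [card_descent _ _ h]
      simp only [List.length_cons]
      omega

lemma tau_mul_self (j : Fin M) : tau j * tau j = 1 := Equiv.swap_mul_self _ _

lemma strictMono_eq_one {w : Equiv.Perm (Fin (M+1))} (hw : StrictMono w) : w = 1 := by
  have hr : Set.range (w : Fin (M+1) → Fin (M+1)) = Set.range (id : Fin (M+1) → Fin (M+1)) := by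
    simp [Set.range_eq_univ.2 w.surjective]
  have h : (w : Fin (M+1) → Fin (M+1)) = (id : Fin (M+1) → Fin (M+1)) :=
    (hw.range_inj strictMono_id).1 hr
  exact Equiv.ext fun x => congrFun h x

lemma exists_word : ∀ (n : ℕ) (w : Equiv.Perm (Fin (M+1))), (invSet w).card = n →
    ∃ l : List (Fin M), wordPerm l = w ∧ l.length = n := by
  intro n
  induction n using Nat.strong_induction_on with
  | _ n ih =>
    intro w hw
    rcases Nat.eq_zero_or_pos n with rfl | hn
    · refine ⟨[], ?_, rfl⟩
      have hempty : invSet w = ∅ := Finset.card_eq_zero.1 hw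
      have hmono : StrictMono w := by
        intro a b hab
        rcases lt_trichotomy (w a) (w b) with h | h | h
        · exact h
        · exact absurd (w.injective h) hab.ne
        · exfalso
          have : (a, b) ∈ invSet w := mem_invSet.2 ⟨hab, h⟩
          rw [hempty] at this
          exact absurd this (Finset.notMem_empty _)
      rw [wordPerm_nil, strictMono_eq_one hmono]
    · have hdesc : ∃ j : Fin M, w j.succ < w j.castSucc := by
        by_contra hcon
        push_neg at hcon
        have hmono : StrictMono w := Fin.strictMono_iff_lt_succ.2 fun j => by
          rcases lt_trichotomy (w j.castSucc) (w j.succ) with h | h | h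
          · exact h
          · exact absurd (w.injective h) (Fin.castSucc_lt_succ (i := j)).ne
          · exact absurd h (not_lt.2 (hcon j))
        rw [strictMono_eq_one hmono, invSet_one] at hw
        simp at hw
        omega
      obtain ⟨j, hj⟩ := hdesc
      have hw' : (w * tau j) * tau j = w := by
        rw [mul_assoc, tau_mul_self, mul_one]
      have hasc : (w * tau j) j.castSucc < (w * tau j) j.succ := by
        simpa [Equiv.Perm.mul_apply, tau] using hj
      have hcard : n = (invSet (w * tau j)).card + 1 := by
        conv_lhs => rw [← hw, ← hw']
        exact card_ascent (w * tau j) j hasc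
      obtain ⟨t, ht, htl⟩ := ih (n - 1) (by omega) (w * tau j) (by omega)
      exact ⟨j :: t, by rw [wordPerm_cons, ht, hw'], by simp [htl]; omega⟩

lemma rootPairs_cons (j : Fin M) (t : List (Fin M)) :
    rootPairs (j :: t) = (j.castSucc, j.succ) :: (rootPairs t).map (pm j) := rfl

lemma rootPairs_reduced : ∀ l : List (Fin M), l.length = (invSet (wordPerm l)).card →
    (rootPairs l).Nodup ∧ ∀ p, p ∈ rootPairs l ↔ p ∈ invSet (wordPerm l) := by
  intro l
  induction l with
  | nil =>
    intro _
    refine ⟨List.nodup_nil, fun p => ?_⟩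
    rw [wordPerm_nil, invSet_one]
    simp [rootPairs]
  | cons j t ih =>
    intro hlen
    rw [wordPerm_cons] at hlen
    set u := wordPerm t with hu
    have hle := card_le_length t
    rw [← hu] at hle
    have hasc : u j.castSucc < u j.succ := by
      rcases lt_trichotomy (u j.castSucc) (u j.succ) with h | h | h
      · exact h
      · exact absurd (u.injective h) (Fin.castSucc_lt_succ (i := j)).ne
      · exfalso
        have := card_descent u j h
        simp only [List.length_cons] at hlen
        omega
    have hkey := invSet_mul_ascent u j hasc
    have hcard := card_ascent u j hasc
    have ht : t.length = (invSet u).card := by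
      simp only [List.length_cons] at hlen
      omega
    obtain ⟨hnodup, hmem⟩ := ih ht
    constructor
    · rw [rootPairs_cons]
      refine List.Nodup.cons ?_ (hnodup.map (pm_inj j))
      intro hmem2
      obtain ⟨q, hq, hpm⟩ := List.mem_map.1 hmem2
      have hq' : q = (j.succ, j.castSucc) := by
        have := congrArg (pm j) hpm
        rw [pm_pm] at this
        rw [this]; simp [pm, tau]
      rw [hq'] at hq
      have := (mem_invSet.1 ((hmem _).1 hq)).1
      exact absurd this (not_lt.2 (Fin.castSucc_lt_succ (i := j)).le)
    · intro p
      rw [rootPairs_cons, wordPerm_cons, ← hu, hkey]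
      simp only [List.mem_cons, List.mem_map, Finset.mem_insert, Finset.mem_image]
      constructor
      · rintro (h | ⟨q, hq, hpm⟩)
        · exact Or.inl h
        · exact Or.inr ⟨q, (hmem q).1 hq, hpm⟩
      · rintro (h | ⟨q, hq, hpm⟩)
        · exact Or.inl h
        · exact Or.inr ⟨q, (hmem q).2 hq, hpm⟩

lemma subRight_val (i : Fin (M+1)) (x : Fin (M+1)) :
    ((Equiv.subRight i x : Fin (M+1)) : ℕ) =
      if (i : ℕ) ≤ (x : ℕ) then (x : ℕ) - (i : ℕ) else (x : ℕ) + (M+1) - (i : ℕ) := by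
  rw [Equiv.subRight_apply, Fin.sub_def]
  have hi := i.isLt
  have hx := x.isLt
  split_ifs with h
  · have h1 : (M + 1 - (i : ℕ)) + (x : ℕ) = ((x : ℕ) - (i : ℕ)) + (M + 1) := by omega
    simp only [h1, Nat.add_mod_right]
    exact Nat.mod_eq_of_lt (by omega)
  · exact Nat.mod_eq_of_lt (by omega) |>.trans (by omega)

lemma subRight_lt_iff (i : Fin (M+1)) (hi : (i : ℕ) ≠ 0) {a b : Fin (M+1)} (hab : a < b) :
    (Equiv.subRight i b < Equiv.subRight i a ↔ ((a : ℕ) < (i : ℕ) ∧ (i : ℕ) ≤ (b : ℕ))) := by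
  rw [Fin.lt_def, subRight_val, subRight_val]
  rw [Fin.lt_def] at hab
  have hb := b.isLt
  split_ifs <;> omega

end Stmt15Aux

theorem stmt15 [FiniteDimensional ℂ VV]
    (act : g →ₗ⁅ℂ⁆ Module.End ℂ VV) (Egl : Fin (M+1) → Fin (M+1) → g)
    -- the gl_N commutation relations
    (hgl : ∀ a b c d : Fin (M+1),
      ⁅Egl a b, Egl c d⁆ =
        (if b = c then (1 : ℂ) else 0) • Egl a d - (if d = a then (1 : ℂ) else 0) • Egl c b)
    -- i ∈ {1, …, N−1}, and a reduced presentation l of w_{[i]} : k ↦ k − i mod N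
    (i : Fin (M+1)) (hi : (i : ℕ) ≠ 0)
    (l : List (Fin M)) (hl : wordPerm l = Equiv.subRight i)
    (hred : ∀ l' : List (Fin M), wordPerm l' = Equiv.subRight i → l.length ≤ l'.length)
    -- λ, and a weight vector v of weight ν
    (lam nu : Fin (M+1) → ℝ) (v : VV)
    (hv : ∀ a : Fin (M+1), act (Egl a a) v = ((nu a : ℝ) : ℂ) • v)
    -- genericity of λ
    (hgen : ∀ a b : Fin (M+1), a ≠ b → ∀ j : ℕ,
      IsUnit ((tval lam nu a b) • (1 : Module.End ℂ VV) -
        act (Egl a a - Egl b b) - (j : ℂ) • 1)) :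
    -- (1) 𝔹_{w_{[i]},V}(λ) is the product, in a suitable order, of all B^α_V(λ) with
    -- α ∈ Σ₊, (ω_i^∨, α) > 0, i.e. α = (a,b) with a < i ≤ b
    (∃ L : List (Fin (M+1) × Fin (M+1)), L.Nodup ∧
      (∀ p : Fin (M+1) × Fin (M+1),
        p ∈ L ↔ (p.1 < p.2 ∧ (p.1 : ℕ) < (i : ℕ) ∧ (i : ℕ) ≤ (p.2 : ℕ))) ∧
      BBop act Egl lam nu l = ((L.map fun p => Bop act Egl lam nu p.1 p.2).prod)) ∧
    -- (2) the positive roots made negative by w_{[i]} are exactly those with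
    -- (ω_i^∨, α) = 1
    (∀ a b : Fin (M+1), a < b →
      (Equiv.subRight i b < Equiv.subRight i a ↔ ((a : ℕ) < (i : ℕ) ∧ (i : ℕ) ≤ (b : ℕ)))) := by
  classical
  have harith : ∀ a b : Fin (M+1), a < b →
      (Equiv.subRight i b < Equiv.subRight i a ↔ ((a:ℕ) < (i:ℕ) ∧ (i:ℕ) ≤ (b:ℕ))) :=
    fun a b hab => Stmt15Aux.subRight_lt_iff i hi hab
  refine ⟨?_, harith⟩
  obtain ⟨l₀, hl₀, hl₀len⟩ := Stmt15Aux.exists_word (M := M)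
    ((Stmt15Aux.invSet (Equiv.subRight i)).card) (Equiv.subRight i) rfl
  have h1 : l.length ≤ (Stmt15Aux.invSet (Equiv.subRight i)).card := hl₀len ▸ hred l₀ hl₀
  have h2 : (Stmt15Aux.invSet (wordPerm l)).card ≤ l.length := Stmt15Aux.card_le_length l
  have hlen : l.length = (Stmt15Aux.invSet (wordPerm l)).card := by
    rw [hl]; rw [hl] at h2; omega
  obtain ⟨hnodup, hmem⟩ := Stmt15Aux.rootPairs_reduced l hlen
  refine ⟨(rootPairs l).reverse, List.nodup_reverse.2 hnodup, ?_, ?_⟩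
  · intro p
    rw [List.mem_reverse, hmem p, hl, Stmt15Aux.mem_invSet]
    exact and_congr_right fun h3 => harith _ _ h3
  · show (((rootPairs l).map fun p => Bop act Egl lam nu p.1 p.2).reverse).prod = _
    rw [← List.map_reverse]


end
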